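/- A vertex v of a finite simple graph G is simplicial (every two neighbors of v are adjacent) if and only if v is a simplicial vertex of the clutter C_k(G) for every k with 2 ≤ k ≤ |V(G)|, where C_k(G) is the clutter whose edges are the k-element vertex subsets inducing a connected subgraph, and v is simplicial in a clutter C if for any two distinct edges e, f containing v there is an edge g with g ⊆ (e ∪ f) \ {v}. -/

import Mathlib

/-- A vertex of a simple graph is simplicial if any two of its neighbors are adjacent. -/
def GraphSimplicial {V : Type} (G : SimpleGraph V) (v : V) : Prop :=
  ∀ u w : V, G.Adj v u → G.Adj v w → u ≠ w → G.Adj u w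

/-- A vertex `v` of a clutter (given by its edge predicate `Ed`) is simplicial if for any two
distinct edges `e, f` containing `v` there is an edge `g ⊆ (e ∪ f) \ {v}`. -/
def ClutterSimplicial {V : Type} [DecidableEq V] (Ed : Finset V → Prop) (v : V) : Prop :=
  ∀ e f : Finset V, Ed e → Ed f → e ≠ f → v ∈ e → v ∈ f →
    ∃ g : Finset V, Ed g ∧ g ⊆ (e ∪ f).erase v

/-- The edge predicate of the clutter `C_k(G)`: the `k`-element vertex subsets inducing a
connected subgraph. -/
def CkEdge {n : ℕ} (G : SimpleGraph (Fin n)) (k : ℕ) (A : Finset (Fin n)) : Prop :=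
  A.card = k ∧ (G.induce (A : Set (Fin n))).Connected

open SimpleGraph

set_option linter.unusedSectionVars false

variable {V : Type} [DecidableEq V] {G : SimpleGraph V} {v : V}

lemma reach_of_walk {s : Set V} {x y : V} (hx : x ∈ s) (hy : y ∈ s) (p : G.Walk x y)
    (hp : ∀ z ∈ p.support, z ∈ s) : (G.induce s).Reachable ⟨x, hx⟩ ⟨y, hy⟩ := by
  induction p with
  | nil => exact Reachable.refl _
  | @cons a b c h p ih =>
    have hb : b ∈ s := hp b (by simp)
    have h1 : (G.induce s).Adj ⟨a, hx⟩ ⟨b, hb⟩ := by simpa using h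
    exact h1.reachable.trans (ih hb hy (fun z hz => hp z (by simp [hz])))

lemma walk_in_set {s : Set V} {x y : s} (h : (G.induce s).Reachable x y) :
    ∃ p : G.Walk (x : V) (y : V), ∀ z ∈ p.support, z ∈ s := by
  obtain ⟨q⟩ := h
  refine ⟨q.map (Embedding.induce s).toHom, ?_⟩
  intro z hz
  replace hz : z ∈ (q.map (Embedding.induce s).toHom).support := hz
  rw [Walk.support_map] at hz
  obtain ⟨⟨w, hw⟩, _, rfl⟩ := List.mem_map.mp hz
  exact hw

lemma avoid_walk (hv : GraphSimplicial G v) :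
    ∀ (m : ℕ) {x y : V} (p : G.Walk x y), p.length ≤ m → x ≠ v → y ≠ v →
      ∃ q : G.Walk x y, ∀ z ∈ q.support, z ∈ p.support ∧ z ≠ v := by
  intro m
  induction m with
  | zero =>
    intro x y p hl hx hy
    cases p with
    | nil => exact ⟨.nil, by simp [hx]⟩
    | cons h p' => simp [Walk.length_cons] at hl
  | succ m ih =>
    intro x y p hl hx hy
    cases p with
    | nil => exact ⟨.nil, by simp [hx]⟩
    | @cons _ b _ h p' =>
      by_cases hb : b = v
      · subst hb
        cases p' with
        | nil => exact absurd rfl hy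
        | @cons _ c _ h2 p'' =>
          have hc := h2.ne'
          have hl'' : p''.length ≤ m := by
            simp [Walk.length_cons] at hl; omega
          obtain ⟨q, hq⟩ := ih p'' hl'' hc hy
          by_cases hcx : c = x
          · subst hcx
            exact ⟨q, fun z hz => ⟨by simp [(hq z hz).1], (hq z hz).2⟩⟩
          · have hadj : G.Adj x c := hv x c h.symm h2 (Ne.symm hcx)
            refine ⟨.cons hadj q, ?_⟩
            intro z hz
            rcases (Walk.mem_support_iff _).mp hz with rfl | hz'
            · exact ⟨by simp, hx⟩
            · exact ⟨by simp [(hq z hz').1], (hq z hz').2⟩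
      · have hl' : p'.length ≤ m := by simp [Walk.length_cons] at hl; omega
        obtain ⟨q, hq⟩ := ih p' hl' hb hy
        refine ⟨.cons h q, ?_⟩
        intro z hz
        rcases (Walk.mem_support_iff _).mp hz with rfl | hz'
        · exact ⟨by simp, hx⟩
        · exact ⟨by simp [(hq z hz').1], (hq z hz').2⟩

lemma singleton_conn (a : V) : (G.induce ({a} : Set V)).Connected := by
  rw [connected_iff]
  refine ⟨fun x y => ?_, ⟨⟨a, rfl⟩⟩⟩
  have : x = y := Subtype.ext (by
    have hx := x.2; have hy := y.2
    simp only [Set.mem_singleton_iff] at hx hy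
    rw [hx, hy])
  exact this ▸ Reachable.refl _

lemma exists_nbr {s : Finset V} (hc : (G.induce (s : Set V)).Connected) {x y : V}
    (hx : x ∈ s) (hy : y ∈ s) (hxy : x ≠ y) : ∃ a ∈ s, G.Adj x a := by
  have hr := hc.preconnected ⟨x, by simpa using hx⟩ ⟨y, by simpa using hy⟩
  obtain ⟨p, hp⟩ := by
    have := hr; exact (by
      obtain ⟨q⟩ := this
      exact ⟨q.map (Embedding.induce _).toHom, by
        intro z hz
        replace hz : z ∈ (q.map (Embedding.induce (s : Set V)).toHom).support := hz
        rw [Walk.support_map] at hz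
        obtain ⟨⟨w, hw⟩, _, rfl⟩ := List.mem_map.mp hz
        exact hw⟩ : ∃ p : G.Walk x y, ∀ z ∈ p.support, z ∈ (s : Set V))
  cases p with
  | nil => exact absurd rfl hxy
  | @cons _ b _ h p' =>
    exact ⟨b, by simpa using hp b (by simp), h⟩

lemma cross_walk {t : Set V} : ∀ {x y : V} (p : G.Walk x y), x ∈ t → y ∉ t →
    ∃ a b, a ∈ t ∧ b ∉ t ∧ b ∈ p.support ∧ G.Adj a b := by
  intro x y p
  induction p with
  | nil => intro h1 h2; exact absurd h1 h2
  | @cons a b c h p ih =>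
    intro h1 h2
    by_cases hb : b ∈ t
    · obtain ⟨a', b', ha', hb', hs, hadj⟩ := ih hb h2
      exact ⟨a', b', ha', hb', by simp [hs], hadj⟩
    · exact ⟨a, b, h1, hb, by simp, h⟩

lemma erase_conn (hv : GraphSimplicial G v) {s : Finset V} (hvs : v ∈ s) (hcard : 2 ≤ s.card)
    (hc : (G.induce (s : Set V)).Connected) :
    (G.induce ((s.erase v : Finset V) : Set V)).Connected := by
  have havoid := fun (m : ℕ) {x y : V} => avoid_walk hv m (x := x) (y := y)
  rw [connected_iff]
  constructor
  · rintro ⟨x, hx⟩ ⟨y, hy⟩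
    simp only [Finset.coe_erase, Set.mem_diff, Finset.mem_coe, Set.mem_singleton_iff] at hx hy
    have hr := hc.preconnected ⟨x, by simpa using hx.1⟩ ⟨y, by simpa using hy.1⟩
    obtain ⟨p, hp⟩ := walk_in_set hr
    obtain ⟨q, hq⟩ := avoid_walk hv p.length p le_rfl hx.2 hy.2
    exact reach_of_walk _ _ q (fun z hz => by
      simp only [Finset.coe_erase, Set.mem_diff, Set.mem_singleton_iff]
      exact ⟨hp z (hq z hz).1, (hq z hz).2⟩)
  · have : (s.erase v).Nonempty := by
      rw [← Finset.card_pos, Finset.card_erase_of_mem hvs]; omega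
    obtain ⟨a, ha⟩ := this
    exact ⟨⟨a, Finset.mem_coe.mpr ha⟩⟩

lemma conn_insert {t : Finset V} (hc : (G.induce (t : Set V)).Connected) {a b : V}
    (ha : a ∈ t) (hab : G.Adj a b) :
    (G.induce ((insert b t : Finset V) : Set V)).Connected := by
  have hpair : (G.induce ({a, b} : Set V)).Connected := induce_pair_connected_of_adj hab
  have hu := induce_union_connected hc.preconnected hpair.preconnected ⟨a, by simp [ha]⟩
  have : ((t : Set V) ∪ {a, b}) = ((insert b t : Finset V) : Set V) := by
    ext z; simp only [Set.mem_union, Set.mem_insert_iff, Finset.coe_insert, Finset.mem_coe,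
      Set.mem_singleton_iff]
    constructor
    · rintro (h | rfl | rfl)
      · exact Or.inr h
      · exact Or.inr ha
      · exact Or.inl rfl
    · rintro (rfl | h)
      · exact Or.inr (Or.inr rfl)
      · exact Or.inl h
  rwa [this] at hu

lemma crossing {s t : Finset V} (hc : (G.induce (s : Set V)).Connected) (hts : t ⊆ s)
    (ht : t.Nonempty) (hst : (s \ t).Nonempty) : ∃ a ∈ t, ∃ b ∈ s \ t, G.Adj a b := by
  obtain ⟨a0, ha0⟩ := ht
  obtain ⟨b0, hb0⟩ := hst
  rw [Finset.mem_sdiff] at hb0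
  have hr := hc.preconnected ⟨a0, by simpa using hts ha0⟩ ⟨b0, by simpa using hb0.1⟩
  obtain ⟨p, hp⟩ := walk_in_set hr
  obtain ⟨a, b, ha, hb, hbs, hadj⟩ := cross_walk (t := (t : Set V)) p (by simpa using ha0)
    (by simpa using hb0.2)
  exact ⟨a, by simpa using ha, b, Finset.mem_sdiff.mpr ⟨by simpa using hp b hbs,
    by simpa using hb⟩, hadj⟩

lemma exists_conn_subset {s : Finset V} (hc : (G.induce (s : Set V)).Connected) :
    ∀ j : ℕ, 1 ≤ j → j ≤ s.card → ∃ t : Finset V, t ⊆ s ∧ t.card = j ∧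
      (G.induce (t : Set V)).Connected := by
  intro j
  induction j with
  | zero => omega
  | succ j ih =>
    intro _ hj
    by_cases hj1 : j = 0
    · subst hj1
      have : s.Nonempty := Finset.card_pos.mp (by omega)
      obtain ⟨a, ha⟩ := this
      exact ⟨{a}, Finset.singleton_subset_iff.mpr ha, Finset.card_singleton a,
        by rw [Finset.coe_singleton]; exact singleton_conn a⟩
    · obtain ⟨t, hts, htc, htconn⟩ := ih (by omega) (by omega)
      have hst : (s \ t).Nonempty := by
        rw [← Finset.card_pos, Finset.card_sdiff_of_subset hts]; omega
      obtain ⟨a, ha, b, hb, hadj⟩ := crossing hc hts (Finset.card_pos.mp (by omega)) hst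
      rw [Finset.mem_sdiff] at hb
      refine ⟨insert b t, Finset.insert_subset hb.1 hts, ?_, conn_insert htconn ha hadj⟩
      rw [Finset.card_insert_of_notMem hb.2, htc]

/-- A vertex `v` of a finite simple graph `G` is simplicial if and only if it is a simplicial
vertex of the clutter `C_k(G)` for every `k` with `2 ≤ k ≤ |V(G)|`. -/
theorem graphSimplicial_iff_clutterSimplicial {n : ℕ} (G : SimpleGraph (Fin n)) (v : Fin n) :
    GraphSimplicial G v ↔ ∀ k : ℕ, 2 ≤ k → k ≤ n → ClutterSimplicial (CkEdge G k) v := by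
  unfold ClutterSimplicial CkEdge
  constructor
  · intro hs k hk2 hkn e f he hf hef hve hvf
    obtain ⟨hecard, heconn⟩ := he
    obtain ⟨hfcard, hfconn⟩ := hf
    set s := e.erase v with hsdef
    set t := f.erase v with htdef
    have hsconn := erase_conn hs hve (hecard ▸ hk2) heconn
    have htconn := erase_conn hs hvf (hfcard ▸ hk2) hfconn
    have hU : (e ∪ f).erase v = s ∪ t := by
      ext z
      simp only [Finset.mem_erase, Finset.mem_union, hsdef, htdef]
      tauto
    have hconnU : (G.induce ((s ∪ t : Finset (Fin n)) : Set (Fin n))).Connected := by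
      rw [Finset.coe_union]
      by_cases hint : ((s : Set (Fin n)) ∩ (t : Set (Fin n))).Nonempty
      · exact induce_union_connected hsconn.preconnected htconn.preconnected hint
      · obtain ⟨y, hy, hyv⟩ := Finset.exists_mem_ne (s := e) (by omega) v
        obtain ⟨a, ha, hva⟩ := exists_nbr heconn hve hy (Ne.symm hyv)
        obtain ⟨y', hy', hyv'⟩ := Finset.exists_mem_ne (s := f) (by omega) v
        obtain ⟨b, hb, hvb⟩ := exists_nbr hfconn hvf hy' (Ne.symm hyv')
        have has : a ∈ s := Finset.mem_erase.mpr ⟨hva.ne', ha⟩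
        have hbt : b ∈ t := Finset.mem_erase.mpr ⟨hvb.ne', hb⟩
        have hab : a ≠ b := by
          rintro rfl
          exact hint ⟨a, Finset.mem_coe.mpr has, Finset.mem_coe.mpr hbt⟩
        exact connected_induce_union hsconn.preconnected htconn.preconnected (Finset.mem_coe.mpr has)
          (Finset.mem_coe.mpr hbt) (hs a b hva hvb hab)
    have hscard : s.card = k - 1 := by
      rw [hsdef, Finset.card_erase_of_mem hve, hecard]
    obtain ⟨u, hu, hue⟩ : ∃ u ∈ f, u ∉ e := by
      by_contra hcon
      push_neg at hcon
      exact hef (Finset.eq_of_subset_of_card_le hcon (by omega)).symm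
    have hut : u ∈ t := Finset.mem_erase.mpr ⟨fun huv => hue (huv ▸ hve), hu⟩
    have hus : u ∉ s := fun hus => hue (Finset.mem_of_mem_erase hus)
    have hkcard : k ≤ (s ∪ t).card := by
      have h1 : insert u s ⊆ s ∪ t :=
        Finset.insert_subset (Finset.mem_union_right _ hut) Finset.subset_union_left
      have h2 := Finset.card_le_card h1
      rw [Finset.card_insert_of_notMem hus, hscard] at h2
      omega
    obtain ⟨g, hg1, hg2, hg3⟩ := exists_conn_subset hconnU k (by omega) hkcard
    exact ⟨g, ⟨hg2, hg3⟩, hU ▸ hg1⟩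
  · intro h u w hvu hvw huw
    have h2n : 2 ≤ n := by
      have h1 := Finset.card_le_univ ({v, u} : Finset (Fin n))
      rw [Finset.card_pair hvu.ne] at h1
      simpa using h1
    have he : CkEdge G 2 {v, u} :=
      ⟨Finset.card_pair hvu.ne, by
        rw [Finset.coe_insert, Finset.coe_singleton]
        exact induce_pair_connected_of_adj hvu⟩
    have hf : CkEdge G 2 {v, w} :=
      ⟨Finset.card_pair hvw.ne, by
        rw [Finset.coe_insert, Finset.coe_singleton]
        exact induce_pair_connected_of_adj hvw⟩
    have hef : ({v, u} : Finset (Fin n)) ≠ {v, w} := by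
      intro hh
      have : u ∈ ({v, w} : Finset (Fin n)) := hh ▸ (by simp)
      simp only [Finset.mem_insert, Finset.mem_singleton] at this
      rcases this with h1 | h1
      · exact hvu.ne' h1
      · exact huw h1
    obtain ⟨g, ⟨hgcard, hgconn⟩, hgsub⟩ := h 2 le_rfl h2n _ _ he hf hef (by simp) (by simp)
    have hsub : ∀ z ∈ g, z = u ∨ z = w := by
      intro z hz
      have := hgsub hz
      rw [Finset.mem_erase, Finset.mem_union] at this
      simp only [Finset.mem_insert, Finset.mem_singleton] at this
      tauto
    obtain ⟨a, b, hab, rfl⟩ := Finset.card_eq_two.mp hgcard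
    have hadj : G.Adj a b := by
      obtain ⟨c, hc, hadj⟩ := exists_nbr hgconn (by simp : a ∈ ({a,b} : Finset (Fin n)))
        (by simp : b ∈ ({a,b} : Finset (Fin n))) hab
      simp only [Finset.mem_insert, Finset.mem_singleton] at hc
      rcases hc with rfl | rfl
      · exact absurd rfl hadj.ne
      · exact hadj
    rcases hsub a (by simp) with rfl | rfl <;> rcases hsub b (by simp) with h1 | h1
    · exact (hab h1.symm).elim
    · exact h1 ▸ hadj
    · exact h1 ▸ hadj.symm
    · exact (hab h1.symm).elim
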